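/- Let σ > 0 and δ > 0, set r = δ/σ, and let p_z be the standardized two-component Gaussian mixture density p_z(v) = (N(v;−δ̂,σ̂) + N(v;δ̂,σ̂))/2 with δ̂ = δ/√(σ²+δ²), σ̂ = σ/√(σ²+δ²). Then the differential entropy of p_z satisfies the lower bound H(p_z) ≥ (1/2)(1 + ln(2π)) − (1/2) ln(1 + r²). -/

import Mathlib

open Real MeasureTheory

/-- The univariate Gaussian density `N(v; μ, σ) = (1/(σ√(2π))) exp(−(v−μ)²/(2σ²))`. -/
noncomputable def gauss (μ σ : ℝ) (v : ℝ) : ℝ :=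
  (1 / (σ * Real.sqrt (2 * π))) * Real.exp (-((v - μ) ^ 2) / (2 * σ ^ 2))

/-- The differential entropy `H(p) = −∫ p(v) ln p(v) dv` of a density on ℝ. -/
noncomputable def diffEntropy (p : ℝ → ℝ) : ℝ :=
  -∫ v : ℝ, p v * Real.log (p v)

lemma gauss_eq (μ σ : ℝ) (v : ℝ) :
    gauss μ σ v = (1 / (σ * Real.sqrt (2 * π))) * Real.exp (-(2 * σ ^ 2)⁻¹ * (v - μ) ^ 2) := by
  unfold gauss
  congr 1
  congr 1
  ring

lemma gauss_pos {μ σ : ℝ} (hσ : 0 < σ) (v : ℝ) : 0 < gauss μ σ v := by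
  have hπ := Real.pi_pos
  unfold gauss
  positivity

lemma gauss_continuous (μ σ : ℝ) : Continuous (gauss μ σ) := by
  unfold gauss
  fun_prop

lemma integrable_gauss {μ σ : ℝ} (hσ : 0 < σ) : Integrable (gauss μ σ) := by
  have hb : 0 < (2 * σ ^ 2)⁻¹ := by positivity
  have h := ((integrable_exp_neg_mul_sq hb).comp_sub_right μ).const_mul
      (1 / (σ * Real.sqrt (2 * π)))
  refine h.congr (Filter.Eventually.of_forall fun v => ?_)
  rw [gauss_eq]

lemma integrable_sq_gauss {μ σ : ℝ} (hσ : 0 < σ) :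
    Integrable (fun v => (v - μ) ^ 2 * gauss μ σ v) := by
  have hb : 0 < (2 * σ ^ 2)⁻¹ := by positivity
  have h1 : Integrable (fun x : ℝ => x ^ (2 : ℝ) * Real.exp (-(2 * σ ^ 2)⁻¹ * x ^ 2)) :=
    integrable_rpow_mul_exp_neg_mul_sq hb (by norm_num)
  have h1' : Integrable (fun x : ℝ => x ^ 2 * Real.exp (-(2 * σ ^ 2)⁻¹ * x ^ 2)) := by
    simpa [Real.rpow_two] using h1
  have h2 := (h1'.comp_sub_right μ).const_mul (1 / (σ * Real.sqrt (2 * π)))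
  refine h2.congr (Filter.Eventually.of_forall fun v => ?_)
  dsimp only
  rw [gauss_eq]
  ring

lemma integrable_sqrt_gauss {μ σ : ℝ} (hσ : 0 < σ) :
    Integrable (fun v => Real.sqrt (gauss μ σ v)) := by
  have hπ := Real.pi_pos
  have hb : 0 < (4 * σ ^ 2)⁻¹ := by positivity
  have h := ((integrable_exp_neg_mul_sq hb).comp_sub_right μ).const_mul
      (Real.sqrt (1 / (σ * Real.sqrt (2 * π))))
  refine h.congr (Filter.Eventually.of_forall fun v => ?_)
  dsimp only
  rw [gauss_eq, Real.sqrt_mul (by positivity : (0:ℝ) ≤ 1 / (σ * Real.sqrt (2 * π)))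
    (Real.exp (-(2 * σ ^ 2)⁻¹ * (v - μ) ^ 2)), ← Real.exp_half]
  congr 1
  field_simp
  ring_nf

lemma integral_gauss {μ σ : ℝ} (hσ : 0 < σ) : ∫ v, gauss μ σ v = 1 := by
  have hπ := Real.pi_pos
  have hb : 0 < (2 * σ ^ 2)⁻¹ := by positivity
  simp_rw [gauss_eq μ σ]
  rw [MeasureTheory.integral_const_mul,
    integral_sub_right_eq_self (fun x => Real.exp (-(2 * σ ^ 2)⁻¹ * x ^ 2)) μ,
    integral_gaussian]
  have h1 : π / (2 * σ ^ 2)⁻¹ = (2 * π) * σ ^ 2 := by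
    field_simp
  rw [h1, Real.sqrt_mul (by positivity) (σ ^ 2), Real.sqrt_sq hσ.le]
  have h2 : 0 < Real.sqrt (2 * π) := Real.sqrt_pos.mpr (by positivity)
  field_simp

lemma integral_sq_gauss {μ σ : ℝ} (hσ : 0 < σ) :
    ∫ v, (v - μ) ^ 2 * gauss μ σ v = σ ^ 2 := by
  have hπ := Real.pi_pos
  have hb : 0 < (2 * σ ^ 2)⁻¹ := by positivity
  have hrw : ∀ v : ℝ, (v - μ) ^ 2 * gauss μ σ v
      = (1 / (σ * Real.sqrt (2 * π))) * ((v - μ) ^ 2 * Real.exp (-(2 * σ ^ 2)⁻¹ * (v - μ) ^ 2)) := by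
    intro v
    rw [gauss_eq]
    ring
  simp_rw [hrw]
  rw [MeasureTheory.integral_const_mul,
    integral_sub_right_eq_self (fun x => x ^ 2 * Real.exp (-(2 * σ ^ 2)⁻¹ * x ^ 2)) μ]
  have habs : (∫ x : ℝ, x ^ 2 * Real.exp (-(2 * σ ^ 2)⁻¹ * x ^ 2))
      = 2 * ∫ x in Set.Ioi (0 : ℝ), x ^ 2 * Real.exp (-(2 * σ ^ 2)⁻¹ * x ^ 2) := by
    rw [← integral_comp_abs (f := fun x => x ^ 2 * Real.exp (-(2 * σ ^ 2)⁻¹ * x ^ 2))]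
    simp_rw [sq_abs]
  rw [habs]
  have hIoi : (∫ x in Set.Ioi (0 : ℝ), x ^ 2 * Real.exp (-(2 * σ ^ 2)⁻¹ * x ^ 2))
      = ((2 * σ ^ 2)⁻¹ : ℝ) ^ (-((2 : ℝ) + 1) / 2) * (1 / 2) * Real.Gamma (((2 : ℝ) + 1) / 2) := by
    rw [← integral_rpow_mul_exp_neg_mul_rpow two_pos (by norm_num : (-1 : ℝ) < 2) hb]
    refine setIntegral_congr_fun measurableSet_Ioi (fun x hx => ?_)
    simp [Real.rpow_two]
  rw [hIoi]
  have hgamma : Real.Gamma (((2 : ℝ) + 1) / 2) = Real.sqrt π / 2 := by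
    have : ((2 : ℝ) + 1) / 2 = 1 / 2 + 1 := by norm_num
    rw [this, Real.Gamma_add_one (by norm_num), Real.Gamma_one_half_eq]
    ring
  have hbpow : ((2 * σ ^ 2)⁻¹ : ℝ) ^ (-((2 : ℝ) + 1) / 2) = (2 * σ ^ 2) * Real.sqrt (2 * σ ^ 2) := by
    have ha : (0 : ℝ) < 2 * σ ^ 2 := by positivity
    rw [show (-((2 : ℝ) + 1) / 2) = -(3 / 2 : ℝ) by norm_num,
      Real.inv_rpow ha.le, Real.rpow_neg (by positivity), inv_inv,
      show (3 / 2 : ℝ) = 1 + 1 / 2 by norm_num,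
      Real.rpow_add ha, Real.rpow_one, ← Real.sqrt_eq_rpow]
  rw [hgamma, hbpow, Real.sqrt_mul (by norm_num) (σ ^ 2), Real.sqrt_sq hσ.le,
    Real.sqrt_mul (by norm_num) π]
  have h2 : 0 < Real.sqrt 2 := by positivity
  have hp : 0 < Real.sqrt π := Real.sqrt_pos.mpr hπ
  have h22 : Real.sqrt 2 * Real.sqrt 2 = 2 := Real.mul_self_sqrt (by norm_num)
  field_simp

lemma log_gauss {μ σ : ℝ} (hσ : 0 < σ) (v : ℝ) :
    Real.log (gauss μ σ v)
      = -Real.log (σ * Real.sqrt (2 * π)) - (2 * σ ^ 2)⁻¹ * (v - μ) ^ 2 := by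
  have hπ := Real.pi_pos
  rw [gauss_eq, Real.log_mul (by positivity) (Real.exp_ne_zero _), Real.log_exp, one_div,
    Real.log_inv]
  ring

lemma integrable_gauss_mul_log {μ σ : ℝ} (hσ : 0 < σ) :
    Integrable (fun v => gauss μ σ v * Real.log (gauss μ σ v)) := by
  have h := (((integrable_gauss (μ := μ) hσ).const_mul
      (-Real.log (σ * Real.sqrt (2 * π)))).add
      ((integrable_sq_gauss (μ := μ) hσ).const_mul (-(2 * σ ^ 2)⁻¹)))
  refine h.congr (Filter.Eventually.of_forall fun v => ?_)
  simp only [Pi.add_apply]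
  rw [log_gauss hσ]
  ring

lemma integral_gauss_mul_log {μ σ : ℝ} (hσ : 0 < σ) :
    ∫ v, gauss μ σ v * Real.log (gauss μ σ v)
      = -Real.log (σ * Real.sqrt (2 * π)) - 1 / 2 := by
  have hrw : ∀ v, gauss μ σ v * Real.log (gauss μ σ v)
      = (-Real.log (σ * Real.sqrt (2 * π))) * gauss μ σ v
        + (-(2 * σ ^ 2)⁻¹) * ((v - μ) ^ 2 * gauss μ σ v) := by
    intro v
    rw [log_gauss hσ]
    ring
  simp_rw [hrw]
  rw [integral_add ((integrable_gauss hσ).const_mul _) ((integrable_sq_gauss hσ).const_mul _),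
    MeasureTheory.integral_const_mul, MeasureTheory.integral_const_mul, integral_gauss hσ,
    integral_sq_gauss hσ]
  have hσ2 : (σ : ℝ) ^ 2 ≠ 0 := by positivity
  field_simp
  ring

lemma mul_log_avg_le {a b : ℝ} (ha : 0 ≤ a) (hb : 0 ≤ b) :
    ((a + b) / 2) * Real.log ((a + b) / 2) ≤ (a * Real.log a + b * Real.log b) / 2 := by
  have h := Real.convexOn_mul_log.2 (Set.mem_Ici.mpr ha) (Set.mem_Ici.mpr hb)
      (by norm_num : (0 : ℝ) ≤ 1 / 2) (by norm_num : (0 : ℝ) ≤ 1 / 2) (by norm_num)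
  simp only [smul_eq_mul] at h
  have e : (a + b) / 2 = (1 / 2 : ℝ) * a + (1 / 2 : ℝ) * b := by ring
  rw [e]
  linarith [h]

lemma neg_mul_log_le {t : ℝ} (ht : 0 < t) : -(t * Real.log t) ≤ 2 * Real.sqrt t := by
  have hst : 0 < Real.sqrt t := Real.sqrt_pos.mpr ht
  have hlog : Real.log t = 2 * Real.log (Real.sqrt t) := by
    rw [Real.log_sqrt ht.le]; ring
  have h2 : -Real.log (Real.sqrt t) ≤ (Real.sqrt t)⁻¹ - 1 := by
    have := Real.log_le_sub_one_of_pos (inv_pos.mpr hst)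
    rwa [Real.log_inv] at this
  have h3 : t * (Real.sqrt t)⁻¹ = Real.sqrt t := by
    rw [← Real.mul_self_sqrt ht.le]
    field_simp
    rw [Real.sqrt_sq hst.le]
  rw [hlog]
  nlinarith [mul_le_mul_of_nonneg_left h2 ht.le]

lemma sqrt_add_le' {x y : ℝ} (hx : 0 ≤ x) (hy : 0 ≤ y) :
    Real.sqrt (x + y) ≤ Real.sqrt x + Real.sqrt y := by
  have h := Real.sqrt_le_sqrt (show x + y ≤ (Real.sqrt x + Real.sqrt y) ^ 2 by
    nlinarith [Real.sq_sqrt hx, Real.sq_sqrt hy, Real.sqrt_nonneg x, Real.sqrt_nonneg y])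
  rwa [Real.sqrt_sq (by positivity)] at h

lemma integrable_mix_mul_log {d σ : ℝ} (hσ : 0 < σ) :
    Integrable (fun v => ((gauss (-d) σ v + gauss d σ v) / 2)
      * Real.log ((gauss (-d) σ v + gauss d σ v) / 2)) := by
  set f := gauss (-d) σ with hfdef
  set g := gauss d σ with hgdef
  have hfpos : ∀ v, 0 < f v := gauss_pos hσ
  have hgpos : ∀ v, 0 < g v := gauss_pos hσ
  have hD : Integrable (fun v =>
      (|f v * Real.log (f v)| + |g v * Real.log (g v)|) / 2
        + 2 * (Real.sqrt (f v) + Real.sqrt (g v))) := by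
    refine (((integrable_gauss_mul_log hσ).abs.add
      (integrable_gauss_mul_log hσ).abs).div_const 2).add
      (((integrable_sqrt_gauss hσ).add (integrable_sqrt_gauss hσ)).const_mul 2)
  refine hD.mono' ?_ (Filter.Eventually.of_forall fun v => ?_)
  · have hc : Continuous fun v => (f v + g v) / 2 :=
      ((gauss_continuous _ _).add (gauss_continuous _ _)).div_const 2
    exact (hc.measurable.mul (Real.measurable_log.comp hc.measurable)).aestronglyMeasurable
  · set p := (f v + g v) / 2 with hp
    have hppos : 0 < p := by
      have := hfpos v; have := hgpos v; positivity
    have hupper : p * Real.log p ≤ (|f v * Real.log (f v)| + |g v * Real.log (g v)|) / 2 := by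
      calc p * Real.log p ≤ (f v * Real.log (f v) + g v * Real.log (g v)) / 2 :=
            mul_log_avg_le (hfpos v).le (hgpos v).le
        _ ≤ (|f v * Real.log (f v)| + |g v * Real.log (g v)|) / 2 := by
            gcongr <;> exact le_abs_self _
    have hsp : Real.sqrt p ≤ Real.sqrt (f v) + Real.sqrt (g v) := by
      have h1 : p ≤ f v + g v := by
        have := (hfpos v).le; have := (hgpos v).le
        simp only [hp]; linarith
      exact (Real.sqrt_le_sqrt h1).trans (sqrt_add_le' (hfpos v).le (hgpos v).le)
    have hlower : -(p * Real.log p) ≤ 2 * (Real.sqrt (f v) + Real.sqrt (g v)) :=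
      (neg_mul_log_le hppos).trans (by linarith)
    rw [Real.norm_eq_abs, abs_le]
    constructor
    · have h1 : (0:ℝ) ≤ (|f v * Real.log (f v)| + |g v * Real.log (g v)|) / 2 := by positivity
      linarith
    · have h2 : (0:ℝ) ≤ 2 * (Real.sqrt (f v) + Real.sqrt (g v)) := by positivity
      linarith

/-- lower bound on the differential entropy of the standardized
two-component Gaussian mixture `p_z(v) = (N(v;−δ̂,σ̂) + N(v;δ̂,σ̂))/2`:
`H(p_z) ≥ (1/2)(1 + ln(2π)) − (1/2) ln(1 + r²)` where `r = δ/σ`. -/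
theorem diffEntropy_standardized_mixture_lower (σ δ : ℝ) (hσ : 0 < σ) (hδ : 0 < δ)
    (r δhat σhat : ℝ) (hr : r = δ / σ)
    (hδhat : δhat = δ / Real.sqrt (σ ^ 2 + δ ^ 2))
    (hσhat : σhat = σ / Real.sqrt (σ ^ 2 + δ ^ 2)) :
    diffEntropy (fun v => (gauss (-δhat) σhat v + gauss δhat σhat v) / 2) ≥
      (1 / 2) * (1 + Real.log (2 * π)) - (1 / 2) * Real.log (1 + r ^ 2) := by
  have hπ := Real.pi_pos
  have hA : 0 < σ ^ 2 + δ ^ 2 := by positivity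
  have hsqA : 0 < Real.sqrt (σ ^ 2 + δ ^ 2) := Real.sqrt_pos.mpr hA
  have hs : 0 < σhat := by rw [hσhat]; positivity
  set f := gauss (-δhat) σhat with hfdef
  set g := gauss δhat σhat with hgdef
  have hf : Integrable (fun v => f v * Real.log (f v)) := integrable_gauss_mul_log hs
  have hg : Integrable (fun v => g v * Real.log (g v)) := integrable_gauss_mul_log hs
  have hmono : (∫ v, (f v + g v) / 2 * Real.log ((f v + g v) / 2))
      ≤ ∫ v, (f v * Real.log (f v) + g v * Real.log (g v)) / 2 := by
    refine integral_mono (integrable_mix_mul_log hs) ((hf.add hg).div_const 2) fun v => ?_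
    exact mul_log_avg_le (gauss_pos hs v).le (gauss_pos hs v).le
  have hval : (∫ v, (f v * Real.log (f v) + g v * Real.log (g v)) / 2)
      = -Real.log (σhat * Real.sqrt (2 * π)) - 1 / 2 := by
    rw [integral_div, integral_add hf hg, integral_gauss_mul_log hs, integral_gauss_mul_log hs]
    ring
  have hlogσhat : Real.log σhat = Real.log σ - Real.log (σ ^ 2 + δ ^ 2) / 2 := by
    rw [hσhat, Real.log_div hσ.ne' hsqA.ne', Real.log_sqrt hA.le]
  have hlogr : Real.log (1 + r ^ 2) = Real.log (σ ^ 2 + δ ^ 2) - 2 * Real.log σ := by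
    have h1 : (1 : ℝ) + r ^ 2 = (σ ^ 2 + δ ^ 2) / σ ^ 2 := by
      rw [hr]
      field_simp
      try ring
    rw [h1, Real.log_div hA.ne' (by positivity), Real.log_pow]
    push_cast
    try ring
  have hlogmul : Real.log (σhat * Real.sqrt (2 * π))
      = Real.log σhat + Real.log (2 * π) / 2 := by
    rw [Real.log_mul hs.ne' (by positivity), Real.log_sqrt (by positivity)]
  have hRHS : (1 / 2) * (1 + Real.log (2 * π)) - (1 / 2) * Real.log (1 + r ^ 2)
      = Real.log (σhat * Real.sqrt (2 * π)) + 1 / 2 := by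
    rw [hlogmul, hlogσhat, hlogr]
    ring
  rw [ge_iff_le, hRHS]
  unfold diffEntropy
  have := hmono.trans_eq hval
  linarith
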